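/- Suppose M is an antichain of monomials over X, w ∈ M, and the letter x satisfies ∂_x w ≥ ∂_x u for every u in M (x occurs in w with the largest exponent it has in any member of M). Then for every linear order ≺ on X that is cool for M, x is not internal to w with respect to ≺. -/

import Mathlib

variable {X : Type*}

/-- A letter is extremal in a monomial (w.r.t. the linear order `r`) if it is the
least or greatest letter of its support. -/
def ExtremalO (r : LinearOrder X) (w : X →₀ ℕ) (x : X) : Prop :=
  x ∈ w.support ∧ ((∀ y ∈ w.support, r.le x y) ∨ (∀ y ∈ w.support, r.le y x))

/-- A letter is internal to a monomial (w.r.t. the linear order `r`) if it lies strictly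
between its extremal letters. -/
def InternalO (r : LinearOrder X) (w : X →₀ ℕ) (x : X) : Prop :=
  (∃ a ∈ w.support, r.lt a x) ∧ (∃ b ∈ w.support, r.lt x b)

/-- A linear order `r` on the letters is cool for a set `M` of monomials if for every
`w ∈ M` and letter `x` internal to `w` there is `s ∈ M` with `x` extremal in `s` and
`s/x` dividing `w`. -/
def Cool (r : LinearOrder X) (M : Set (X →₀ ℕ)) : Prop :=
  ∀ w ∈ M, ∀ x : X, InternalO r w x → ∃ s ∈ M, ExtremalO r s x ∧ Finsupp.erase x s ≤ w

/-- A set of monomials is an antichain if no member divides another. -/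
def IsMonAntichain (M : Set (X →₀ ℕ)) : Prop := ∀ u ∈ M, ∀ v ∈ M, u ≤ v → u = v

/-- If `x` occurs in `w ∈ M` with its largest exponent over the antichain `M`, then in
any cool ordering for `M` the letter `x` is not internal to `w`. -/
theorem stmt11 (M : Set (X →₀ ℕ)) (hM : IsMonAntichain M) (w : X →₀ ℕ) (hw : w ∈ M)
    (x : X) (hmax : ∀ u ∈ M, u x ≤ w x) (r : LinearOrder X) (hcool : Cool r M) :
    ¬ InternalO r w x := by
  intro hint
  obtain ⟨s, hsM, ⟨hxs, hext⟩, hle⟩ := hcool w hw x hint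
  have hsw : s ≤ w := by
    intro y
    by_cases hy : y = x
    · subst hy; exact hmax s hsM
    · have := hle y
      rwa [Finsupp.erase_ne hy] at this
  have heq : s = w := hM s hsM w hw hsw
  subst heq
  obtain ⟨⟨a, ha, hax⟩, ⟨b, hb, hxb⟩⟩ := hint
  rcases hext with h | h
  · exact absurd (h a ha) ((r.lt_iff_le_not_ge _ _).mp hax).2
  · exact absurd (h b hb) ((r.lt_iff_le_not_ge _ _).mp hxb).2
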